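/- There exists a resource contribution game G such that NE^pref(G) = ∅ for every kind of preferences pref ∈ {ct, ca, pca}. Concretely, for distinct atomic resources A and B, the two-player RCG with endowments ε_1 = ε_2 = {A·B} and goals γ_1 = A, γ_2 = B·B admits no pure Nash equilibrium for any of the three kinds of preferences. -/

import Mathlib

open scoped Classical

/-- A resource contribution game over atomic resource type `Res` with player set `ι`:
each player has a goal (a resource bundle, i.e. a multiset of atomic resources) and
an endowment (a resource bag, i.e. a multiset of resource bundles). -/
structure RCG (Res ι : Type*) where
  goal : ι → Multiset Res
  endow : ι → Multiset (Multiset Res)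

namespace RCG

variable {Res ι : Type*} [Fintype ι]

/-- A profile assigns to each player a bag (his contribution). -/
abbrev Profile (Res ι : Type*) := ι → Multiset (Multiset Res)

/-- Outcome of a profile: the multiset sum of all contributions. -/
def out (P : Profile Res ι) : Multiset (Multiset Res) := ∑ i, P i

/-- The bag `X` can be transformed into the bundle `B`: `♭(B) ⊆ ♭•(X)`. -/
def Trans (X : Multiset (Multiset Res)) (B : Multiset Res) : Prop := B ≤ X.sum

/-- Player `i` is potentially satisfied by profile `P`. -/
def Psat (G : RCG Res ι) (P : Profile Res ι) (i : ι) : Prop :=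
  Trans (out P) (G.goal i)

/-- The set of players potentially satisfied by `P`. -/
noncomputable def psatPlayers (G : RCG Res ι) (P : Profile Res ι) : Finset ι :=
  Finset.univ.filter fun i => Psat G P i

/-- The profile `P` is contentious. -/
def Contentious (G : RCG Res ι) (P : Profile Res ι) : Prop :=
  ¬ Trans (out P) (∑ j ∈ psatPlayers G P, G.goal j)

/-- Restriction of bundle `B` to the resource types occurring in `C`. -/
noncomputable def restr (B C : Multiset Res) : Multiset Res := B.filter (· ∈ C)

/-- The profile `P` is contentious for player `i`. -/
def ContentiousFor (G : RCG Res ι) (P : Profile Res ι) (i : ι) : Prop :=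
  Psat G P i ∧ ¬ Trans (out P) (∑ j ∈ psatPlayers G P, restr (G.goal j) (G.goal i))

/-- The three kinds of preferences: contention-tolerant, (public) contention-averse,
private contention-averse. -/
inductive Pref | ct | ca | pca

/-- `P` is a good profile for player `i` according to preference kind `pref`. -/
def Good (pref : Pref) (G : RCG Res ι) (P : Profile Res ι) (i : ι) : Prop :=
  match pref with
  | .ct => Psat G P i
  | .ca => Psat G P i ∧ ¬ Contentious G P
  | .pca => Psat G P i ∧ ¬ ContentiousFor G P i

/-- Player `i` strictly prefers `P` over `Q` (i.e. `Q ≺^pref_i P`). -/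
def Prefers (pref : Pref) (G : RCG Res ι) (i : ι) (Q P : Profile Res ι) : Prop :=
  (¬ Good pref G P i ∧ ¬ Good pref G Q i ∧ P i < Q i) ∨
  (Good pref G P i ∧ ¬ Good pref G Q i) ∨
  (Good pref G P i ∧ Good pref G Q i ∧ P i < Q i)

/-- `C` is a profitable deviation for player `i` from profile `P`. -/
noncomputable def ProfDev (pref : Pref) (G : RCG Res ι) (P : Profile Res ι) (i : ι)
    (C : Multiset (Multiset Res)) : Prop :=
  C ≤ G.endow i ∧ Prefers pref G i P (Function.update P i C)

/-- `P` is a pure Nash equilibrium of `G` according to `pref`: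
`P` is a profile of `G` and no player has a profitable deviation. -/
noncomputable def NE (pref : Pref) (G : RCG Res ι) (P : Profile Res ι) : Prop :=
  (∀ i, P i ≤ G.endow i) ∧ ∀ i C, ¬ ProfDev pref G P i C

/-- `G` is an RCG with endowments as bags of atomic resources. -/
def IsRCGBAR (G : RCG Res ι) : Prop :=
  ∀ i, ∀ B ∈ G.endow i, ∃ r : Res, B = {r}

/-- `G` has independent objectives. -/
def IndepObjectives (G : RCG Res ι) : Prop :=
  ∀ i j : ι, i ≠ j → ∀ r : Res, r ∈ G.goal i → r ∉ G.goal j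

end RCG

/-- the two-player game with `ε₁ = ε₂ = {A·B}`, `γ₁ = A`, `γ₂ = B·B`
admits no pure Nash equilibrium for any kind of preferences. -/
theorem exists_game_no_NE {Res : Type*} (A B : Res) (hAB : A ≠ B)
    (G : RCG Res (Fin 2))
    (hgoal : G.goal = ![({A} : Multiset Res), ({B, B} : Multiset Res)])
    (hendow : G.endow = ![({({A, B} : Multiset Res)} : Multiset (Multiset Res)),
                          ({({A, B} : Multiset Res)} : Multiset (Multiset Res))]) :
    ∀ pref : RCG.Pref, ∀ P : RCG.Profile Res (Fin 2), ¬ RCG.NE pref G P := by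
  intro pref P hNE
  obtain ⟨hfeas, hdev⟩ := hNE
  have hBA : B ≠ A := hAB.symm
  set E : Multiset Res := {A, B} with hE
  have hg0 : G.goal 0 = {A} := by simp [hgoal]
  have hg1 : G.goal 1 = ({B, B} : Multiset Res) := by simp [hgoal]
  have hend : ∀ i : Fin 2, G.endow i = {E} := by
    intro i; fin_cases i <;> simp [hendow, hE]
  have hch : ∀ i : Fin 2, P i = 0 ∨ P i = {E} := by
    intro i
    exact Multiset.le_singleton.mp (by rw [← hend i]; exact hfeas i)
  have hout : ∀ Q : RCG.Profile Res (Fin 2), RCG.out Q = Q 0 + Q 1 := fun Q =>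
    Fin.sum_univ_two Q
  -- basic multiset facts
  have mAB : ({A} : Multiset Res) ≤ E := by
    simp [hE]
  have nBB : ¬ (({B, B} : Multiset Res) ≤ E) := by
    intro h
    have := Multiset.count_le_of_le B h
    simp [hE, Multiset.count_cons, hBA] at this
  have nA0 : ¬ (({A} : Multiset Res) ≤ 0) := by simp
  have nBB0 : ¬ (({B, B} : Multiset Res) ≤ 0) := by
    intro h; have := Multiset.count_le_of_le B h; simp [Multiset.count_cons] at this
  have le2BB : ({B, B} : Multiset Res) ≤ E + E := by
    rw [Multiset.le_iff_count]
    intro a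
    by_cases ha : a = B
    · subst ha; simp [hE, Multiset.count_cons, hBA]
    · simp [hE, Multiset.count_cons, ha]
  have le2ABB : ({A} : Multiset Res) + {B, B} ≤ E + E := by
    rw [Multiset.le_iff_count]
    intro a
    by_cases ha : a = B
    · subst ha; simp [hE, Multiset.count_cons, hBA]
    · by_cases hb : a = A
      · subst hb; simp [hE, Multiset.count_cons, hAB]
      · simp [hE, Multiset.count_cons, ha, hb]
  have mAE2 : ({A} : Multiset Res) ≤ E + E := le_trans mAB (le_add_right (le_refl E))
  -- restriction facts
  have r00 : RCG.restr (G.goal 0) (G.goal 0) = {A} := by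
    simp [RCG.restr, hg0, Multiset.filter_singleton]
  have r10 : RCG.restr (G.goal 1) (G.goal 0) = 0 := by
    simp [RCG.restr, hg1, hg0, Multiset.filter_cons, Multiset.filter_singleton, hBA]
  have r01 : RCG.restr (G.goal 0) (G.goal 1) = 0 := by
    simp [RCG.restr, hg0, hg1, Multiset.filter_singleton, hAB]
  have r11 : RCG.restr (G.goal 1) (G.goal 1) = ({B, B} : Multiset Res) := by
    simp [RCG.restr, hg1, Multiset.filter_cons, Multiset.filter_singleton]
  have nBB' : ¬ ((B ::ₘ {B} : Multiset Res) ≤ E) := nBB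
  have le2BB' : ((B ::ₘ {B} : Multiset Res)) ≤ E + E := le2BB
  have nBB0' : ¬ ((B ::ₘ {B} : Multiset Res) ≤ 0) := nBB0
  -- not good when not potentially satisfied
  have notGood : ∀ pf (Q : RCG.Profile Res (Fin 2)) i, ¬ RCG.Psat G Q i →
      ¬ RCG.Good pf G Q i := by
    intro pf Q i h hg
    cases pf
    · exact h hg
    · exact h hg.1
    · exact h hg.1
  -- good in "shape 1": outcome sums to E, for player 0
  have shape1 : ∀ (Q : RCG.Profile Res (Fin 2)), (RCG.out Q).sum = E →
      ∀ pf, RCG.Good pf G Q 0 := by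
    intro Q hQ pf
    have hps0 : RCG.Psat G Q 0 := by
      simp [RCG.Psat, RCG.Trans, hQ, hg0, mAB]
    have hps : RCG.psatPlayers G Q = {0} := by
      ext i
      fin_cases i <;>
        simp [RCG.psatPlayers, RCG.Psat, RCG.Trans, hQ, hg0, hg1, mAB, nBB, nBB']
    have hnc : ¬ RCG.Contentious G Q := by
      simp [RCG.Contentious, RCG.Trans, hQ, hps, hg0, mAB]
    have hncf : ¬ RCG.ContentiousFor G Q 0 := by
      intro h
      exact h.2 (by simp [RCG.Trans, hQ, hps, r00, mAB])
    cases pf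
    · exact hps0
    · exact ⟨hps0, hnc⟩
    · exact ⟨hps0, hncf⟩
  -- good in "shape 2": outcome sums to E + E, for both players
  have shape2 : ∀ (Q : RCG.Profile Res (Fin 2)), (RCG.out Q).sum = E + E →
      ∀ pf i, RCG.Good pf G Q i := by
    intro Q hQ pf i
    have hps0 : RCG.Psat G Q 0 := by
      simp [RCG.Psat, RCG.Trans, hQ, hg0, mAE2]
    have hps1 : RCG.Psat G Q 1 := by
      simp [RCG.Psat, RCG.Trans, hQ, hg1, le2BB, le2BB']
    have hps : RCG.psatPlayers G Q = Finset.univ := by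
      ext i
      fin_cases i <;>
        simp [RCG.psatPlayers, RCG.Psat, RCG.Trans, hQ, hg0, hg1, mAE2, le2BB, le2BB']
    have hnc : ¬ RCG.Contentious G Q := by
      simp only [RCG.Contentious, RCG.Trans, hQ, hps, not_not]
      rw [Fin.sum_univ_two, hg0, hg1]
      exact le2ABB
    have hncf0 : ¬ RCG.ContentiousFor G Q 0 := by
      intro h
      apply h.2
      simp only [RCG.Trans, hQ, hps]
      rw [Fin.sum_univ_two, r00, r10]
      simpa using mAE2
    have hncf1 : ¬ RCG.ContentiousFor G Q 1 := by
      intro h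
      apply h.2
      simp only [RCG.Trans, hQ, hps]
      rw [Fin.sum_univ_two, r01, r11]
      simpa using le2BB
    fin_cases i
    · cases pf
      · exact hps0
      · exact ⟨hps0, hnc⟩
      · exact ⟨hps0, hncf0⟩
    · cases pf
      · exact hps1
      · exact ⟨hps1, hnc⟩
      · exact ⟨hps1, hncf1⟩
  have hlt : (0 : Multiset (Multiset Res)) < {E} := by
    apply lt_of_le_of_ne (Multiset.zero_le _)
    exact (Multiset.singleton_ne_zero E).symm
  rcases hch 0 with h0 | h0 <;> rcases hch 1 with h1 | h1
  · -- P = (0, 0): player 0 deviates to {E}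
    apply hdev 0 {E}
    refine ⟨by rw [hend 0], ?_⟩
    right; left
    constructor
    · apply shape1
      rw [hout]
      simp [Function.update, h1]
    · apply notGood
      simp [RCG.Psat, RCG.Trans, hout, h0, h1, hg0, nA0]
  · -- P = (0, {E}): player 1 deviates to 0
    apply hdev 1 0
    refine ⟨Multiset.zero_le _, ?_⟩
    left
    refine ⟨?_, ?_, ?_⟩
    · apply notGood
      simp only [RCG.Psat, RCG.Trans, hout, hg1]
      simp [Function.update, h0, nBB0, nBB0']
    · apply notGood
      simp [RCG.Psat, RCG.Trans, hout, h0, h1, hg1, nBB, nBB']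
    · simp [Function.update, h1, hlt]
  · -- P = ({E}, 0): player 1 deviates to {E}
    apply hdev 1 {E}
    refine ⟨by rw [hend 1], ?_⟩
    right; left
    constructor
    · apply shape2
      rw [hout]
      simp [Function.update, h0, Multiset.sum_singleton]
    · apply notGood
      simp [RCG.Psat, RCG.Trans, hout, h0, h1, hg1, nBB, nBB']
  · -- P = ({E}, {E}): player 0 deviates to 0
    apply hdev 0 0
    refine ⟨Multiset.zero_le _, ?_⟩
    right; right
    refine ⟨?_, ?_, ?_⟩
    · apply shape1
      rw [hout]
      simp [Function.update, h1]
    · apply shape2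
      rw [hout]
      simp [h0, h1]
    · simp [Function.update, h0, hlt]
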